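/- For all real μ, ν ≥ 0, the total variation distance between the Poisson distributions with means μ and ν satisfies d_TV(Po(μ), Po(ν)) ≤ |√μ − √ν|. -/

import Mathlib

/-- Total variation distance between two probability mass functions on ℕ:
`sup_{A ⊆ ℕ} |P(A) - Q(A)|`. -/
noncomputable def tvDist (f g : ℕ → ℝ) : ℝ :=
  ⨆ A : Set ℕ, |(∑' m : A, f m.1) - (∑' m : A, g m.1)|

/-- The Poisson probability mass function with mean `μ`. -/
noncomputable def poissonPMF (μ : ℝ) (m : ℕ) : ℝ :=
  Real.exp (-μ) * μ ^ m / (m.factorial : ℝ)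

lemma real_exp_tsum (x : ℝ) : Real.exp x = ∑' n : ℕ, x ^ n / (n.factorial : ℝ) := by
  rw [Real.exp_eq_exp_ℝ, NormedSpace.exp_eq_tsum_div]

lemma poissonPMF_nonneg {μ : ℝ} (hμ : 0 ≤ μ) (m : ℕ) : 0 ≤ poissonPMF μ m := by
  unfold poissonPMF
  positivity

lemma summable_poissonPMF (μ : ℝ) : Summable (poissonPMF μ) := by
  have := (Real.summable_pow_div_factorial μ).mul_left (Real.exp (-μ))
  refine this.congr fun m => ?_
  unfold poissonPMF; ring

lemma tsum_poissonPMF (μ : ℝ) : ∑' m, poissonPMF μ m = 1 := by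
  have h : ∀ m : ℕ, poissonPMF μ m = Real.exp (-μ) * (μ ^ m / (m.factorial : ℝ)) := by
    intro m; rw [poissonPMF, mul_div_assoc]
  simp_rw [h]
  rw [tsum_mul_left, ← real_exp_tsum, ← Real.exp_add]
  simp

lemma sqrt_poisson_mul {μ ν : ℝ} (hμ : 0 ≤ μ) (hν : 0 ≤ ν) (m : ℕ) :
    Real.sqrt (poissonPMF μ m * poissonPMF ν m)
      = Real.exp (-((μ + ν) / 2)) * (Real.sqrt (μ * ν)) ^ m / (m.factorial : ℝ) := by
  have h1 : (Real.sqrt (μ * ν) ^ m) ^ 2 = μ ^ m * ν ^ m := by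
    rw [← pow_mul, mul_comm m 2, pow_mul, Real.sq_sqrt (mul_nonneg hμ hν), mul_pow]
  have h2 : Real.exp (-((μ + ν) / 2)) ^ 2 = Real.exp (-μ) * Real.exp (-ν) := by
    rw [sq, ← Real.exp_add, ← Real.exp_add]; ring_nf
  have h : poissonPMF μ m * poissonPMF ν m
      = (Real.exp (-((μ + ν) / 2)) * (Real.sqrt (μ * ν)) ^ m / (m.factorial : ℝ)) ^ 2 := by
    unfold poissonPMF
    rw [div_pow, mul_pow, h1, h2]
    ring
  rw [h, Real.sqrt_sq (by positivity)]

lemma tsum_sqrt_poisson_mul {μ ν : ℝ} (hμ : 0 ≤ μ) (hν : 0 ≤ ν) :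
    ∑' m, Real.sqrt (poissonPMF μ m * poissonPMF ν m)
      = Real.exp (-(Real.sqrt μ - Real.sqrt ν) ^ 2 / 2) := by
  have h : ∀ m : ℕ, Real.sqrt (poissonPMF μ m * poissonPMF ν m)
      = Real.exp (-((μ + ν) / 2)) * ((Real.sqrt (μ * ν)) ^ m / (m.factorial : ℝ)) := by
    intro m; rw [sqrt_poisson_mul hμ hν, mul_div_assoc]
  simp_rw [h]
  rw [tsum_mul_left, ← real_exp_tsum, ← Real.exp_add]
  congr 1
  rw [Real.sqrt_mul hμ]
  linear_combination (Real.sq_sqrt hμ) / 2 + (Real.sq_sqrt hν) / 2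

lemma summable_sqrt_poisson_mul {μ ν : ℝ} (hμ : 0 ≤ μ) (hν : 0 ≤ ν) :
    Summable (fun m => Real.sqrt (poissonPMF μ m * poissonPMF ν m)) := by
  have := (Real.summable_pow_div_factorial (Real.sqrt (μ * ν))).mul_left
    (Real.exp (-((μ + ν) / 2)))
  refine this.congr fun m => ?_
  rw [sqrt_poisson_mul hμ hν, mul_div_assoc]

/-- Lemma 2.8: the total variation distance between two Poisson distributions is
at most `|√μ - √ν|`. -/
theorem poisson_tvDist_le (μ ν : ℝ) (hμ : 0 ≤ μ) (hν : 0 ≤ ν) :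
    tvDist (poissonPMF μ) (poissonPMF ν) ≤ |Real.sqrt μ - Real.sqrt ν| := by
  set p := poissonPMF μ with hp
  set q := poissonPMF ν with hq
  set δ : ℝ := |Real.sqrt μ - Real.sqrt ν| with hδ
  have hδ0 : 0 ≤ δ := abs_nonneg _
  set B : ℝ := Real.exp (-(Real.sqrt μ - Real.sqrt ν) ^ 2 / 2) with hB
  have hB1 : B ≤ 1 := by
    rw [hB, Real.exp_le_one_iff]
    nlinarith [sq_nonneg (Real.sqrt μ - Real.sqrt ν)]
  have hsp := summable_poissonPMF μ
  have hsq := summable_poissonPMF ν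
  have hsr := summable_sqrt_poisson_mul hμ hν
  have hpn := poissonPMF_nonneg hμ
  have hqn := poissonPMF_nonneg hν
  -- abbreviations
  set a : ℕ → ℝ := fun m => Real.sqrt (p m) with ha
  set b : ℕ → ℝ := fun m => Real.sqrt (q m) with hb
  have hab : ∀ m, a m * b m = Real.sqrt (p m * q m) := by
    intro m; rw [ha, hb]; exact (Real.sqrt_mul (hpn m) _).symm
  have ha2 : ∀ m, a m ^ 2 = p m := fun m => Real.sq_sqrt (hpn m)
  have hb2 : ∀ m, b m ^ 2 = q m := fun m => Real.sq_sqrt (hqn m)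
  -- sums of (a-b)^2 and (a+b)^2
  have hsub_eq : ∀ m, (a m - b m) ^ 2 = p m + q m - 2 * Real.sqrt (p m * q m) := by
    intro m; rw [← hab m, ← ha2 m, ← hb2 m]; ring
  have hadd_eq : ∀ m, (a m + b m) ^ 2 = p m + q m + 2 * Real.sqrt (p m * q m) := by
    intro m; rw [← hab m, ← ha2 m, ← hb2 m]; ring
  have hssub : Summable (fun m => (a m - b m) ^ 2) := by
    refine (((hsp.add hsq).sub (hsr.mul_left 2)).congr fun m => ?_)
    exact (hsub_eq m).symm
  have hsadd : Summable (fun m => (a m + b m) ^ 2) := by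
    refine (((hsp.add hsq).add (hsr.mul_left 2)).congr fun m => ?_)
    exact (hadd_eq m).symm
  have htsub : ∑' m, (a m - b m) ^ 2 = 2 - 2 * B := by
    simp_rw [hsub_eq]
    rw [Summable.tsum_sub (hsp.add hsq) (hsr.mul_left 2), Summable.tsum_add hsp hsq,
      tsum_mul_left, tsum_poissonPMF, tsum_poissonPMF, tsum_sqrt_poisson_mul hμ hν, hB]
    ring
  have htadd : ∑' m, (a m + b m) ^ 2 = 2 + 2 * B := by
    simp_rw [hadd_eq]
    rw [Summable.tsum_add (hsp.add hsq) (hsr.mul_left 2), Summable.tsum_add hsp hsq,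
      tsum_mul_left, tsum_poissonPMF, tsum_poissonPMF, tsum_sqrt_poisson_mul hμ hν, hB]
    ring
  have htsub_nonneg : (0:ℝ) ≤ 2 - 2 * B := by
    rw [← htsub]; exact tsum_nonneg fun m => sq_nonneg _
  -- L1 bound via Cauchy-Schwarz
  have habs : Summable (fun m => |p m - q m|) := (hsp.sub hsq).abs
  have hL1 : ∑' m, |p m - q m| ≤ 2 * δ := by
    have hbound : ∀ s : Finset ℕ, ∑ m ∈ s, |p m - q m|
        ≤ Real.sqrt (2 - 2 * B) * Real.sqrt (2 + 2 * B) := by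
      intro s
      have heq : ∀ m, |p m - q m| = |a m - b m| * (a m + b m) := by
        intro m
        rw [← ha2 m, ← hb2 m]
        have : a m ^ 2 - b m ^ 2 = (a m - b m) * (a m + b m) := by ring
        rw [this, abs_mul, abs_of_nonneg (add_nonneg (Real.sqrt_nonneg _) (Real.sqrt_nonneg _))]
      have hCS : (∑ m ∈ s, |a m - b m| * (a m + b m)) ^ 2
          ≤ (∑ m ∈ s, |a m - b m| ^ 2) * ∑ m ∈ s, (a m + b m) ^ 2 := by
        exact Finset.sum_mul_sq_le_sq_mul_sq s _ _
      have h1 : ∑ m ∈ s, |a m - b m| ^ 2 ≤ 2 - 2 * B := by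
        rw [← htsub]
        refine Summable.sum_le_tsum (L := SummationFilter.unconditional ℕ) s (fun m _ => sq_nonneg _) ?_ |>.trans_eq ?_
        · exact hssub.congr fun m => (sq_abs _).symm
        · exact tsum_congr fun m => sq_abs _
      have h2 : ∑ m ∈ s, (a m + b m) ^ 2 ≤ 2 + 2 * B := by
        rw [← htadd]
        exact Summable.sum_le_tsum s (fun m _ => sq_nonneg _) hsadd
      have hnn : 0 ≤ ∑ m ∈ s, |a m - b m| * (a m + b m) :=
        Finset.sum_nonneg fun m _ => mul_nonneg (abs_nonneg _)
          (add_nonneg (Real.sqrt_nonneg _) (Real.sqrt_nonneg _))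
      calc ∑ m ∈ s, |p m - q m| = ∑ m ∈ s, |a m - b m| * (a m + b m) :=
            Finset.sum_congr rfl fun m _ => heq m
        _ = Real.sqrt ((∑ m ∈ s, |a m - b m| * (a m + b m)) ^ 2) :=
            (Real.sqrt_sq hnn).symm
        _ ≤ Real.sqrt ((2 - 2 * B) * (2 + 2 * B)) := by
            refine Real.sqrt_le_sqrt (hCS.trans ?_)
            have hs1 : (0:ℝ) ≤ ∑ m ∈ s, |a m - b m| ^ 2 :=
              Finset.sum_nonneg fun m _ => sq_nonneg _
            have : (0:ℝ) ≤ 2 + 2 * B := by positivity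
            nlinarith
        _ = Real.sqrt (2 - 2 * B) * Real.sqrt (2 + 2 * B) := by
            rw [Real.sqrt_mul htsub_nonneg]
    have := Summable.tsum_le_of_sum_le habs hbound
    refine this.trans ?_
    have h1 : Real.sqrt (2 - 2 * B) ≤ δ := by
      have hle : 2 - 2 * B ≤ δ ^ 2 := by
        have := Real.add_one_le_exp (-(Real.sqrt μ - Real.sqrt ν) ^ 2 / 2)
        rw [← hB] at this
        have hsq : δ ^ 2 = (Real.sqrt μ - Real.sqrt ν) ^ 2 := sq_abs _
        nlinarith
      calc Real.sqrt (2 - 2 * B) ≤ Real.sqrt (δ ^ 2) := Real.sqrt_le_sqrt hle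
        _ = δ := Real.sqrt_sq hδ0
    have h2 : Real.sqrt (2 + 2 * B) ≤ 2 := by
      have h4 : Real.sqrt (2 + 2 * B) ≤ Real.sqrt 4 := Real.sqrt_le_sqrt (by linarith)
      have h5 : Real.sqrt 4 = 2 := by
        rw [show (4:ℝ) = 2 ^ 2 by norm_num, Real.sqrt_sq (by norm_num)]
      linarith
    calc Real.sqrt (2 - 2 * B) * Real.sqrt (2 + 2 * B)
        ≤ δ * 2 := mul_le_mul h1 h2 (Real.sqrt_nonneg _) hδ0
      _ = 2 * δ := by ring
  -- conclude from the sup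
  rw [tvDist]
  refine ciSup_le fun A => ?_
  have hdiff : (∑' m : A, p m.1) - (∑' m : A, q m.1) = ∑' m : A, (p m.1 - q m.1) :=
    (Summable.tsum_sub (hsp.subtype A) (hsq.subtype A)).symm
  have hzero : (∑' m : A, (p m.1 - q m.1)) + (∑' m : (Aᶜ : Set ℕ), (p m.1 - q m.1)) = 0 := by
    have := Summable.tsum_subtype_add_tsum_subtype_compl (hsp.sub hsq) A
    rw [this, Summable.tsum_sub hsp hsq, tsum_poissonPMF, tsum_poissonPMF, sub_self]
  have habs1 : |∑' m : A, (p m.1 - q m.1)| ≤ ∑' m : A, |p m.1 - q m.1| := by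
    have := norm_tsum_le_tsum_norm (f := fun m : A => p m.1 - q m.1)
      (habs.subtype A)
    simpa [Real.norm_eq_abs] using this
  have habs2 : |∑' m : (Aᶜ : Set ℕ), (p m.1 - q m.1)|
      ≤ ∑' m : (Aᶜ : Set ℕ), |p m.1 - q m.1| := by
    have := norm_tsum_le_tsum_norm (f := fun m : (Aᶜ : Set ℕ) => p m.1 - q m.1)
      (habs.subtype _)
    simpa [Real.norm_eq_abs] using this
  have hsplit : (∑' m : A, |p m.1 - q m.1|) + (∑' m : (Aᶜ : Set ℕ), |p m.1 - q m.1|)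
      = ∑' m, |p m - q m| := Summable.tsum_subtype_add_tsum_subtype_compl habs A
  have hEq : |∑' m : A, (p m.1 - q m.1)| = |∑' m : (Aᶜ : Set ℕ), (p m.1 - q m.1)| := by
    have : (∑' m : A, (p m.1 - q m.1)) = -(∑' m : (Aᶜ : Set ℕ), (p m.1 - q m.1)) := by
      linarith
    rw [this, abs_neg]
  rw [hdiff]
  have : 2 * |∑' m : A, (p m.1 - q m.1)| ≤ ∑' m, |p m - q m| := by
    calc 2 * |∑' m : A, (p m.1 - q m.1)|
        = |∑' m : A, (p m.1 - q m.1)| + |∑' m : (Aᶜ : Set ℕ), (p m.1 - q m.1)| := by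
          rw [← hEq]; ring
      _ ≤ (∑' m : A, |p m.1 - q m.1|) + (∑' m : (Aᶜ : Set ℕ), |p m.1 - q m.1|) :=
          add_le_add habs1 habs2
      _ = ∑' m, |p m - q m| := hsplit
  linarith
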